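/- Let c > 0, let T ≥ 1, d ≥ T, let w ≥ 1 be an integer, η ∈ (0,1), and W := Σ_{i=0}^{w−1} η^i. For s ∈ {1,…,T} define F_s : ℝ^d → ℝ by F_s(x) := c·σ(σ([x]_s)/√d) + c·σ([x]_s), where σ(z) := 1/(1 + e^{−z}) and [x]_i denotes the i-th coordinate, and set F_s :≡ 0 for s ≤ 0. (These arise as F_s(x) = f_s(x, y*(x)) for the bilevel problem with f_s(x,y) = cσ([y]_s) + cσ([x]_s) and g(x,y) = (μ/2)‖y − φ(x)‖², where [φ(x)]_i = σ([x]_i)/√d, whose unique inner minimizer is y*(x) = φ(x).) Define the window average F̂_{t,w}(x) := (1/W) Σ_{i=0}^{w−1} η^i F_{t−i}(x). Then for every sequence x_1,…,x_T in ℝ^d such that for each t the t-th coordinate of x_t is zero, Σ_{t=1}^T ‖∇F̂_{t,w}(x_t)‖² ≥ c² T / (16 W²). -/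

import Mathlib

/-- The sigmoid function `σ(z) = 1/(1 + e^{-z})`. -/
noncomputable def sigmoid (z : ℝ) : ℝ := 1 / (1 + Real.exp (-z))

noncomputable def sigmoid' (z : ℝ) : ℝ := Real.exp (-z) / (1 + Real.exp (-z))^2

lemma sigmoid'_pos (z : ℝ) : 0 < sigmoid' z := by unfold sigmoid'; positivity

lemma sigmoid'_zero : sigmoid' 0 = 1/4 := by
  simp [sigmoid', Real.exp_zero]; norm_num

lemma hasDerivAt_sigmoid (z : ℝ) : HasDerivAt sigmoid (sigmoid' z) z := by
  have h1 : HasDerivAt (fun z : ℝ => 1 + Real.exp (-z)) (-Real.exp (-z)) z := by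
    have := (Real.hasDerivAt_exp (-z)).comp z (hasDerivAt_neg z)
    simpa using this.const_add 1
  have hne : (1 + Real.exp (-z)) ≠ 0 := by positivity
  have h2 := h1.fun_inv hne
  unfold sigmoid sigmoid'
  simpa [one_div, neg_div, neg_neg] using h2

lemma hasFDerivAt_G (c : ℝ) (d : ℕ) (j : Fin d) (x : EuclideanSpace ℝ (Fin d)) :
    HasFDerivAt (fun y : EuclideanSpace ℝ (Fin d) =>
        c * sigmoid (sigmoid (y j) / Real.sqrt d) + c * sigmoid (y j))
      ((c * (sigmoid' (sigmoid (x j) / Real.sqrt d) * (sigmoid' (x j) / Real.sqrt d))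
        + c * sigmoid' (x j)) • (EuclideanSpace.proj j : EuclideanSpace ℝ (Fin d) →L[ℝ] ℝ)) x := by
  have hproj : HasFDerivAt (fun y : EuclideanSpace ℝ (Fin d) => y j)
      (EuclideanSpace.proj j : EuclideanSpace ℝ (Fin d) →L[ℝ] ℝ) x :=
    (EuclideanSpace.proj j : EuclideanSpace ℝ (Fin d) →L[ℝ] ℝ).hasFDerivAt (x := x)
  have h1 : HasFDerivAt (fun y : EuclideanSpace ℝ (Fin d) => sigmoid (y j))
      (sigmoid' (x j) • (EuclideanSpace.proj j : EuclideanSpace ℝ (Fin d) →L[ℝ] ℝ)) x :=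
    by have := (hasDerivAt_sigmoid (x j)).comp_hasFDerivAt x hproj; exact this
  have h2 : HasFDerivAt (fun y : EuclideanSpace ℝ (Fin d) => sigmoid (y j) / Real.sqrt d)
      ((sigmoid' (x j) / Real.sqrt d) • (EuclideanSpace.proj j : EuclideanSpace ℝ (Fin d) →L[ℝ] ℝ)) x := by
    have := h1.mul_const (Real.sqrt d)⁻¹
    simpa [smul_smul, div_eq_mul_inv, mul_comm] using this
  have h3 := (hasDerivAt_sigmoid (sigmoid (x j) / Real.sqrt d)).comp_hasFDerivAt x h2
  have h4 := (h3.const_mul c).add (h1.const_mul c)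
  refine h4.congr_fderiv ?_
  ext y
  simp [smul_smul]
  ring


/-- Lower-bound construction for the window-averaged bilevel local regret:
with `F_s(x) = c·σ(σ([x]_s)/√d) + c·σ([x]_s)` for `s ∈ {1,…,T}` (and `F_s ≡ 0` for
`s ≤ 0`, here realized by `F 0 ≡ 0` via truncated subtraction) and window averages
`F̂_{t,w} = (1/W)Σ_{i<w} η^i F_{t−i}`, any iterates whose `t`-th coordinate vanishes at
round `t` satisfy `Σ_{t=1}^T ‖∇F̂_{t,w}(x_t)‖² ≥ c²T/(16W²)`. The 0-based index of the
`s`-th coordinate is recorded by `κ`. -/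
theorem window_regret_lower_bound_construction
    (c : ℝ) (hc : 0 < c) (T d w : ℕ) (hT : 1 ≤ T) (hd : T ≤ d) (hw : 1 ≤ w)
    (η : ℝ) (hη : 0 < η) (hη1 : η < 1)
    (W : ℝ) (hW : W = ∑ i ∈ Finset.range w, η ^ i)
    (κ : ℕ → Fin d) (hκ : ∀ s ∈ Finset.Icc 1 T, (κ s : ℕ) = s - 1)
    (F : ℕ → EuclideanSpace ℝ (Fin d) → ℝ)
    (hF0 : ∀ x : EuclideanSpace ℝ (Fin d), F 0 x = 0)
    (hF : ∀ s ∈ Finset.Icc 1 T, ∀ x : EuclideanSpace ℝ (Fin d),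
      F s x = c * sigmoid (sigmoid (x (κ s)) / Real.sqrt d) + c * sigmoid (x (κ s)))
    (Fhat : ℕ → EuclideanSpace ℝ (Fin d) → ℝ)
    (hFhat : ∀ (t : ℕ) (x : EuclideanSpace ℝ (Fin d)),
      Fhat t x = (1 / W) * ∑ i ∈ Finset.range w, η ^ i * F (t - i) x)
    (x : ℕ → EuclideanSpace ℝ (Fin d))
    (hx : ∀ t ∈ Finset.Icc 1 T, x t (κ t) = 0) :
    c ^ 2 * T / (16 * W ^ 2) ≤
      ∑ t ∈ Finset.Icc 1 T, ‖gradient (Fhat t) (x t)‖ ^ 2 := by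
  have hWpos : 0 < W := by
    rw [hW]
    exact Finset.sum_pos (fun i _ => pow_pos hη i)
      (Finset.nonempty_range_iff.mpr (by omega))
  have key : ∀ t ∈ Finset.Icc 1 T,
      c ^ 2 / (16 * W ^ 2) ≤ ‖gradient (Fhat t) (x t)‖ ^ 2 := by
    intro t ht
    obtain ⟨ht1, htT⟩ := Finset.mem_Icc.mp ht
    -- scalar coefficient of the derivative of F s at x t
    set a : ℕ → ℝ := fun s =>
      c * (sigmoid' (sigmoid (x t (κ s)) / Real.sqrt d) * (sigmoid' (x t (κ s)) / Real.sqrt d))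
        + c * sigmoid' (x t (κ s)) with ha
    set D : ℕ → (EuclideanSpace ℝ (Fin d) →L[ℝ] ℝ) := fun i =>
      if t - i = 0 then 0
      else (a (t - i)) • (EuclideanSpace.proj (κ (t - i)) : EuclideanSpace ℝ (Fin d) →L[ℝ] ℝ)
      with hDdef
    have hD : ∀ i, HasFDerivAt (F (t - i)) (D i) (x t) := by
      intro i
      by_cases h0 : t - i = 0
      · have hFz : F (t - i) = fun _ => (0 : ℝ) := by rw [h0]; exact funext hF0
        rw [hFz, hDdef]
        simpa [h0] using hasFDerivAt_const (0 : ℝ) (x t)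
      · have hs : t - i ∈ Finset.Icc 1 T := Finset.mem_Icc.mpr ⟨by omega, by omega⟩
        have hFexp : F (t - i) = fun y : EuclideanSpace ℝ (Fin d) =>
            c * sigmoid (sigmoid (y (κ (t - i))) / Real.sqrt d)
              + c * sigmoid (y (κ (t - i))) := funext (hF _ hs)
        rw [hFexp, hDdef]
        simpa [h0] using hasFDerivAt_G c d (κ (t - i)) (x t)
    have hsum : HasFDerivAt (fun y => ∑ i ∈ Finset.range w, η ^ i * F (t - i) y)
        (∑ i ∈ Finset.range w, η ^ i • D i) (x t) :=
      HasFDerivAt.fun_sum fun i _ => (hD i).const_mul (η ^ i)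
    have hFhatEq : Fhat t = fun y : EuclideanSpace ℝ (Fin d) =>
        (1 / W) * ∑ i ∈ Finset.range w, η ^ i * F (t - i) y := funext (hFhat t)
    have hFD : HasFDerivAt (Fhat t)
        ((1 / W) • ∑ i ∈ Finset.range w, η ^ i • D i) (x t) := by
      rw [hFhatEq]; exact hsum.const_mul (1 / W)
    set e : EuclideanSpace ℝ (Fin d) := EuclideanSpace.single (κ t) (1 : ℝ) with he
    have hinner : inner ℝ (gradient (Fhat t) (x t)) e
        = ((1 / W) • ∑ i ∈ Finset.range w, η ^ i • D i) e := by
      rw [← hFD.fderiv]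
      simp [gradient, InnerProductSpace.toDual_symm_apply]
    have hproj_apply : ∀ (j : Fin d) (y : EuclideanSpace ℝ (Fin d)),
        (EuclideanSpace.proj j : EuclideanSpace ℝ (Fin d) →L[ℝ] ℝ) y = y j := fun _ _ => rfl
    have h0w : (0 : ℕ) ∈ Finset.range w := Finset.mem_range.mpr (by omega)
    have hDe : ∀ i ∈ Finset.range w, i ≠ 0 → η ^ i * (D i e) = 0 := by
      intro i _ hi0
      by_cases h0 : t - i = 0
      · simp [hDdef, h0]
      · have hne2 : κ (t - i) ≠ κ t := by
          have h1 := hκ (t - i) (Finset.mem_Icc.mpr ⟨by omega, by omega⟩)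
          have h2 := hκ t ht
          intro hcontra
          rw [hcontra] at h1
          omega
        simp [hDdef, h0, hproj_apply, he, EuclideanSpace.single_apply, hne2]
    have hD0 : η ^ 0 * (D 0 e) = a t := by
      have ht0 : t ≠ 0 := by omega
      simp [hDdef, ht0, hproj_apply, he, EuclideanSpace.single_apply]
    have hsingle : ∑ i ∈ Finset.range w, η ^ i * (D i e) = a t := by
      rw [Finset.sum_eq_single 0 hDe (fun h => absurd h0w h), hD0]
    have heval : ((1 / W) • ∑ i ∈ Finset.range w, η ^ i • D i) e = a t / W := by
      have hexp : ((1 / W) • ∑ i ∈ Finset.range w, η ^ i • D i) e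
          = (1 / W) * ∑ i ∈ Finset.range w, η ^ i * (D i e) := by
        simp [ContinuousLinearMap.sum_apply]
      rw [hexp, hsingle]; ring
    have hat : c / 4 ≤ a t := by
      have hx0 : x t (κ t) = 0 := hx t ht
      rw [ha]
      simp only [hx0, sigmoid'_zero]
      have hterm1 : 0 ≤ c * (sigmoid' (sigmoid 0 / Real.sqrt d) * ((1:ℝ)/4 / Real.sqrt d)) := by
        have := sigmoid'_pos (sigmoid 0 / Real.sqrt d)
        have hsqrt : (0:ℝ) ≤ Real.sqrt d := Real.sqrt_nonneg d
        positivity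
      nlinarith
    have hnormgrad : c / (4 * W) ≤ ‖gradient (Fhat t) (x t)‖ := by
      have hCS : inner ℝ (gradient (Fhat t) (x t)) e
          ≤ ‖gradient (Fhat t) (x t)‖ * ‖e‖ := real_inner_le_norm _ _
      have hne : ‖e‖ = 1 := by
        rw [he, EuclideanSpace.norm_single]; norm_num
      rw [hne, mul_one] at hCS
      rw [hinner, heval] at hCS
      have h4W : c / (4 * W) = (c / 4) / W := by ring
      have : c / (4 * W) ≤ a t / W := by
        rw [h4W]
        gcongr
      linarith
    have hpow : (c / (4 * W)) ^ 2 ≤ ‖gradient (Fhat t) (x t)‖ ^ 2 := by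
      have h1 : 0 ≤ c / (4 * W) := by positivity
      exact pow_le_pow_left₀ h1 hnormgrad 2
    calc c ^ 2 / (16 * W ^ 2) = (c / (4 * W)) ^ 2 := by ring
      _ ≤ _ := hpow
  calc c ^ 2 * T / (16 * W ^ 2)
      = (Finset.Icc 1 T).card • (c ^ 2 / (16 * W ^ 2)) := by
        rw [Nat.card_Icc]
        simp only [nsmul_eq_mul]
        have : (T + 1 - 1 : ℕ) = T := by omega
        rw [this]; ring
    _ ≤ ∑ t ∈ Finset.Icc 1 T, ‖gradient (Fhat t) (x t)‖ ^ 2 :=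
        Finset.card_nsmul_le_sum _ _ _ key
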